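/- Let H be a finite graph with three distinct vertices a, b, c such that a is adjacent to b and b is adjacent to c. Then the number of graph homomorphisms from the box B_n = [-n,n]^d (with nearest-neighbour adjacency in Z^d) to H is at least 2^(⌊(2n+1)^d/2⌋) + 2^(⌈(2n+1)^d/2⌉); consequently the topological entropy of the hom-shift X_H is at least (log 2)/2. -/

import Mathlib

open Filter

/-- `Zd d` is the group `ℤ^d`, identified with its standard Cayley graph. -/
abbrev Zd (d : ℕ) := Fin d → ℤ

/-- Nearest-neighbour adjacency in `ℤ^d`: `i ~ j` iff `‖i - j‖₁ = 1`. -/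
def adjZ {d : ℕ} (i j : Zd d) : Prop := (∑ k, (i k - j k).natAbs) = 1

/-- The hom-shift `X_H`: the set of graph homomorphisms from `ℤ^d` to `H`. -/
def homShift (d : ℕ) {V : Type*} (H : SimpleGraph V) : Set (Zd d → V) :=
  {x | ∀ i j : Zd d, adjZ i j → H.Adj (x i) (x j)}

/-- The `l^∞` box `B_n = [-n, n]^d` in `ℤ^d`. -/
def box (d n : ℕ) : Set (Zd d) := {i | ∀ k, (i k).natAbs ≤ n}

/-- Globally allowed patterns of `X_H` on the box `B_n`. -/
def boxPatterns (d n : ℕ) {V : Type*} (H : SimpleGraph V) : Set (box d n → V) :=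
  {a | ∃ x ∈ homShift d H, ∀ i : box d n, x i.1 = a i}

-- ===== auxiliary lemmas =====


lemma even_sub_abs (x : ℤ) : Even (x - |x|) := by
  rcases abs_choice x with h | h <;> rw [h]
  · simp
  · have : x - -x = 2 * x := by ring
    rw [this]; exact even_two_mul x

lemma even_sum_iff {d : ℕ} (f : Fin d → ℤ) :
    Even (∑ k, f k) ↔ Even (∑ k, (f k).natAbs) := by
  have h : Even ((∑ k, f k) - (∑ k, ((f k).natAbs : ℤ))) := by
    rw [← Finset.sum_sub_distrib]
    apply Finset.even_sum
    intro k _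
    rw [← Int.abs_eq_natAbs]
    exact even_sub_abs _
  rw [Int.even_sub] at h
  rw [h, ← Nat.cast_sum, Int.even_coe_nat]

lemma adj_parity {d : ℕ} {i j : Zd d} (h : adjZ i j) :
    ¬ (Even (∑ k, i k) ↔ Even (∑ k, j k)) := by
  have h1 := even_sum_iff (fun k => i k - j k)
  rw [h, Finset.sum_sub_distrib, Int.even_sub] at h1
  simp only [Nat.even_iff] at h1
  intro hc
  rw [h1] at hc
  omega

-- ===== the checkerboard construction =====

def cbF {d : ℕ} {V : Type*} (a b c : V) (s : Zd d → Bool) (e : Bool) : Zd d → V :=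
  fun i => if decide (Even (∑ k, i k)) = e then (if s i then a else c) else b

lemma cbF_mem {d : ℕ} {V : Type*} {H : SimpleGraph V} {a b c : V}
    (hab : H.Adj a b) (hbc : H.Adj b c) (s : Zd d → Bool) (e : Bool) :
    cbF a b c s e ∈ homShift d H := by
  intro i j hij
  have hp := adj_parity hij
  have hd : decide (Even (∑ k, i k)) ≠ decide (Even (∑ k, j k)) :=
    fun h => hp (decide_eq_decide.mp h)
  simp only [cbF]
  by_cases h1 : decide (Even (∑ k, i k)) = e
  · have h2 : ¬(decide (Even (∑ k, j k)) = e) := fun h2 => hd (h1.trans h2.symm)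
    rw [if_pos h1, if_neg h2]
    cases hsi : s i <;> simp only [hsi, if_true, if_false, Bool.false_eq_true]
    · exact hbc.symm
    · exact hab
  · have h2 : decide (Even (∑ k, j k)) = e := by
      revert h1 hd; cases e <;> cases hq : decide (Even (∑ k, j k)) <;>
        cases hp2 : decide (Even (∑ k, i k)) <;> simp_all
    rw [if_neg h1, if_pos h2]
    cases hsj : s j <;> simp only [hsj, if_true, if_false, Bool.false_eq_true]
    · exact hbc
    · exact hab.symm

-- ===== box finiteness and cardinality =====

def boxEquiv (d n : ℕ) : ↥(box d n) ≃ (Fin d → ↥(Set.Icc (-(n:ℤ)) (n:ℤ))) where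
  toFun i k := ⟨i.1 k, Set.mem_Icc.mpr (by have := i.2 k; omega)⟩
  invFun f := ⟨fun k => (f k).1, fun k => by have h := Set.mem_Icc.mp (f k).2; show ((f k).1).natAbs ≤ n; omega⟩
  left_inv i := rfl
  right_inv f := rfl

instance boxFinite (d n : ℕ) : Finite ↥(box d n) := by
  have : Finite ↥(Set.Icc (-(n:ℤ)) (n:ℤ)) := (Set.finite_Icc _ _).to_subtype
  exact Finite.of_equiv _ (boxEquiv d n).symm

lemma card_box (d n : ℕ) : Nat.card ↥(box d n) = (2 * n + 1) ^ d := by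
  have : Finite ↥(Set.Icc (-(n:ℤ)) (n:ℤ)) := (Set.finite_Icc _ _).to_subtype
  haveI := Fintype.ofFinite ↥(Set.Icc (-(n:ℤ)) (n:ℤ))
  rw [Nat.card_congr (boxEquiv d n), Nat.card_pi]
  have hIcc : Nat.card ↥(Set.Icc (-(n:ℤ)) (n:ℤ)) = 2 * n + 1 := by
    rw [← Finset.coe_Icc, Nat.card_coe_set_eq, Set.ncard_coe_finset, Int.card_Icc]
    omega
  have hIcc' : Fintype.card ↥(Set.Icc (-(n:ℤ)) (n:ℤ)) = 2 * n + 1 := by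
    rw [← Nat.card_eq_fintype_card]; exact hIcc
  simp [hIcc']

-- ===== convexity of 2^x =====

lemma two_pow_convex_aux (E O : ℕ) (h : O ≤ E) :
    2 ^ ((E + O) / 2) + 2 ^ ((E + O + 1) / 2) ≤ 2 ^ E + 2 ^ O := by
  set N := E + O with hN
  set t := N / 2 - O with ht
  have hO : N / 2 = O + t := by omega
  have hE : E = (N + 1) / 2 + t := by omega
  have hOw : O ≤ (N + 1) / 2 := by omega
  rw [hO, hE, pow_add, pow_add]
  have h1 : 2 ^ O ≤ 2 ^ ((N + 1) / 2) := Nat.pow_le_pow_right (by norm_num) hOw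
  have h2 : 1 ≤ 2 ^ t := Nat.one_le_two_pow
  nlinarith [h1, h2]

lemma two_pow_convex (E O : ℕ) :
    2 ^ ((E + O) / 2) + 2 ^ ((E + O + 1) / 2) ≤ 2 ^ E + 2 ^ O := by
  rcases le_total O E with h | h
  · exact two_pow_convex_aux E O h
  · have := two_pow_convex_aux O E h
    rw [Nat.add_comm E O]
    omega

-- ===== the injection =====

abbrev evenSite (d n : ℕ) := {i : ↥(box d n) // Even (∑ k, i.1 k)}
abbrev oddSite (d n : ℕ) := {i : ↥(box d n) // ¬ Even (∑ k, i.1 k)}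

open Classical in
noncomputable def sextE {d n : ℕ} (s : evenSite d n → Bool) : Zd d → Bool :=
  fun x => if h : x ∈ box d n ∧ Even (∑ k, x k) then s ⟨⟨x, h.1⟩, h.2⟩ else false

open Classical in
noncomputable def sextO {d n : ℕ} (s : oddSite d n → Bool) : Zd d → Bool :=
  fun x => if h : x ∈ box d n ∧ ¬ Even (∑ k, x k) then s ⟨⟨x, h.1⟩, h.2⟩ else false

noncomputable def Phi {d n : ℕ} {V : Type*} (a b c : V)
    (x : (evenSite d n → Bool) ⊕ (oddSite d n → Bool)) : ↥(box d n) → V :=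
  match x with
  | .inl s => fun i => cbF a b c (sextE s) true i.1
  | .inr s => fun i => cbF a b c (sextO s) false i.1

lemma sextE_eval {d n : ℕ} (s : evenSite d n → Bool) (i : ↥(box d n))
    (hp : Even (∑ k, i.1 k)) : sextE s i.1 = s ⟨i, hp⟩ := dif_pos ⟨i.2, hp⟩

lemma sextO_eval {d n : ℕ} (s : oddSite d n → Bool) (i : ↥(box d n))
    (hp : ¬ Even (∑ k, i.1 k)) : sextO s i.1 = s ⟨i, hp⟩ := dif_pos ⟨i.2, hp⟩

lemma Phi_inl_even {d n : ℕ} {V : Type*} (a b c : V) (s : evenSite d n → Bool)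
    (i : ↥(box d n)) (hp : Even (∑ k, i.1 k)) :
    Phi a b c (Sum.inl s) i = if s ⟨i, hp⟩ then a else c := by
  simp only [Phi, cbF]
  rw [if_pos (by simp [hp]), sextE_eval s i hp]

lemma Phi_inl_odd {d n : ℕ} {V : Type*} (a b c : V) (s : evenSite d n → Bool)
    (i : ↥(box d n)) (hp : ¬ Even (∑ k, i.1 k)) :
    Phi a b c (Sum.inl s) i = b := by
  simp only [Phi, cbF]
  rw [if_neg (by simp [hp])]

lemma Phi_inr_odd {d n : ℕ} {V : Type*} (a b c : V) (s : oddSite d n → Bool)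
    (i : ↥(box d n)) (hp : ¬ Even (∑ k, i.1 k)) :
    Phi a b c (Sum.inr s) i = if s ⟨i, hp⟩ then a else c := by
  simp only [Phi, cbF]
  rw [if_pos (by simp [hp]), sextO_eval s i hp]

lemma Phi_inr_even {d n : ℕ} {V : Type*} (a b c : V) (s : oddSite d n → Bool)
    (i : ↥(box d n)) (hp : Even (∑ k, i.1 k)) :
    Phi a b c (Sum.inr s) i = b := by
  simp only [Phi, cbF]
  rw [if_neg (by simp [hp])]

def z0 (d n : ℕ) : ↥(box d n) := ⟨fun _ => 0, fun k => by simp⟩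

lemma z0_even (d n : ℕ) : Even (∑ k, (z0 d n).1 k) := by
  simp [z0]

lemma Phi_inj {d n : ℕ} {V : Type*} {a b c : V}
    (hab : a ≠ b) (hcb : c ≠ b) (hac : a ≠ c) :
    Function.Injective (Phi (d := d) (n := n) a b c) := by
  intro x y hxy
  rcases x with s | s <;> rcases y with t | t
  · congr 1
    funext ⟨i, hp⟩
    have h := congrFun hxy i
    rw [Phi_inl_even a b c s i hp, Phi_inl_even a b c t i hp] at h
    cases hs : s ⟨i, hp⟩ <;> cases ht : t ⟨i, hp⟩ <;> simp_all
  · exfalso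
    have h := congrFun hxy (z0 d n)
    rw [Phi_inl_even a b c s _ (z0_even d n), Phi_inr_even a b c t _ (z0_even d n)] at h
    cases hs : s ⟨z0 d n, z0_even d n⟩ <;> simp_all
  · exfalso
    have h := congrFun hxy (z0 d n)
    rw [Phi_inr_even a b c s _ (z0_even d n), Phi_inl_even a b c t _ (z0_even d n)] at h
    cases ht : t ⟨z0 d n, z0_even d n⟩ <;> simp_all
  · congr 1
    funext ⟨i, hp⟩
    have h := congrFun hxy i
    rw [Phi_inr_odd a b c s i hp, Phi_inr_odd a b c t i hp] at h
    cases hs : s ⟨i, hp⟩ <;> cases ht : t ⟨i, hp⟩ <;> simp_all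

lemma Phi_mem_boxPatterns {d n : ℕ} {V : Type*} {H : SimpleGraph V} {a b c : V}
    (hab : H.Adj a b) (hbc : H.Adj b c)
    (x : (evenSite d n → Bool) ⊕ (oddSite d n → Bool)) :
    Phi a b c x ∈ boxPatterns d n H := by
  rcases x with s | s
  · exact ⟨cbF a b c (sextE s) true, cbF_mem hab hbc _ _, fun i => rfl⟩
  · exact ⟨cbF a b c (sextO s) false, cbF_mem hab hbc _ _, fun i => rfl⟩

lemma Phi_local {d n : ℕ} {V : Type*} {H : SimpleGraph V} {a b c : V}
    (hab : H.Adj a b) (hbc : H.Adj b c)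
    (x : (evenSite d n → Bool) ⊕ (oddSite d n → Bool)) :
    ∀ i j : box d n, adjZ i.1 j.1 → H.Adj (Phi a b c x i) (Phi a b c x j) := by
  rcases x with s | s <;> intro i j hij <;> exact cbF_mem hab hbc _ _ i.1 j.1 hij

-- ===== counting =====

lemma card_split (d n : ℕ) :
    Nat.card (evenSite d n) + Nat.card (oddSite d n) = (2 * n + 1) ^ d := by
  classical
  rw [← card_box d n, ← Nat.card_sum]
  exact Nat.card_congr (Equiv.sumCompl _)

lemma card_domain_ge (d n : ℕ) :
    2 ^ ((2 * n + 1) ^ d / 2) + 2 ^ (((2 * n + 1) ^ d + 1) / 2) ≤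
      Nat.card ((evenSite d n → Bool) ⊕ (oddSite d n → Bool)) := by
  rw [Nat.card_sum, Nat.card_fun, Nat.card_fun]
  have hb : Nat.card Bool = 2 := by simp [Nat.card_eq_fintype_card]
  rw [hb]
  have h := two_pow_convex (Nat.card (evenSite d n)) (Nat.card (oddSite d n))
  rwa [card_split d n] at h


/-- If `H` has distinct vertices `a ∼ b ∼ c`, then the number of graph homomorphisms
from `B_n` to `H` is at least `2^⌊(2n+1)^d/2⌋ + 2^⌈(2n+1)^d/2⌉`, and consequently
`h_top(X_H) ≥ (log 2)/2`. -/
theorem hom_shift_entropy_lower_bound {d : ℕ} (hd : 1 ≤ d) {V : Type*} [Fintype V]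
    {H : SimpleGraph V} {a b c : V} (hab : H.Adj a b) (hbc : H.Adj b c) (hac : a ≠ c) :
    (∀ n : ℕ,
      2 ^ ((2 * n + 1) ^ d / 2) + 2 ^ (((2 * n + 1) ^ d + 1) / 2) ≤
        Nat.card {f : box d n → V //
          ∀ i j : box d n, adjZ i.1 j.1 → H.Adj (f i) (f j)}) ∧
    (∀ h : ℝ,
      Tendsto (fun n : ℕ =>
          Real.log (Nat.card (boxPatterns d n H)) / ((2 * (n : ℝ) + 1) ^ d))
        atTop (nhds h) →
      Real.log 2 / 2 ≤ h) := by
  have key : ∀ n : ℕ,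
      2 ^ ((2 * n + 1) ^ d / 2) + 2 ^ (((2 * n + 1) ^ d + 1) / 2) ≤
        Nat.card (boxPatterns d n H) ∧
      2 ^ ((2 * n + 1) ^ d / 2) + 2 ^ (((2 * n + 1) ^ d + 1) / 2) ≤
        Nat.card {f : box d n → V //
          ∀ i j : box d n, adjZ i.1 j.1 → H.Adj (f i) (f j)} := by
    intro n
    have hinj := Phi_inj (a := a) (b := b) (c := c) (d := d) (n := n) hab.ne hbc.ne' hac
    constructor
    · refine le_trans (card_domain_ge d n) ?_
      exact Nat.card_le_card_of_injective
        (fun x => (⟨Phi a b c x, Phi_mem_boxPatterns hab hbc x⟩ : boxPatterns d n H))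
        (fun x y hxy => hinj (congrArg Subtype.val hxy))
    · refine le_trans (card_domain_ge d n) ?_
      exact Nat.card_le_card_of_injective
        (fun x => ⟨Phi a b c x, Phi_local hab hbc x⟩)
        (fun x y hxy => hinj (congrArg Subtype.val hxy))
  refine ⟨fun n => (key n).2, ?_⟩
  intro h htend
  have hNpos : ∀ n : ℕ, (0:ℝ) < (2*(n:ℝ)+1)^d := fun n => by positivity
  set g : ℕ → ℝ := fun n => (((2*(n:ℝ)+1)^d - 1) / 2 * Real.log 2) / ((2*(n:ℝ)+1)^d)
    with hg
  have hgle : ∀ n : ℕ,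
      g n ≤ Real.log (Nat.card (boxPatterns d n H)) / ((2*(n:ℝ)+1)^d) := by
    intro n
    set N := (2*n+1)^d with hN
    have hcast : ((2*(n:ℝ)+1)^d) = (N:ℝ) := by rw [hN]; push_cast; ring
    have hcard : (2:ℕ)^(N/2) ≤ Nat.card (boxPatterns d n H) :=
      le_trans (Nat.le_add_right _ _) (key n).1
    have hlog : ((N/2 : ℕ) : ℝ) * Real.log 2 ≤
        Real.log (Nat.card (boxPatterns d n H)) := by
      calc ((N/2:ℕ):ℝ) * Real.log 2 = Real.log ((2:ℝ)^(N/2)) := by rw [Real.log_pow]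
      _ ≤ _ := by
          apply Real.log_le_log (by positivity)
          exact_mod_cast hcard
    have hhalf : ((N:ℝ)-1)/2 ≤ ((N/2:ℕ):ℝ) := by
      have h1 : N ≤ 2*(N/2) + 1 := by omega
      have h2 : ((N:ℝ)) ≤ 2*((N/2:ℕ):ℝ) + 1 := by exact_mod_cast h1
      linarith
    have hnum : ((2*(n:ℝ)+1)^d - 1)/2 * Real.log 2 ≤
        Real.log (Nat.card (boxPatterns d n H)) := by
      refine le_trans ?_ hlog
      apply mul_le_mul_of_nonneg_right _ (Real.log_nonneg one_le_two)
      rw [hcast]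
      linarith [hhalf]
    rw [hg]
    exact div_le_div_of_nonneg_right hnum (hNpos n).le
  have hgt : Tendsto g atTop (nhds (Real.log 2 / 2)) := by
    have h1 : Tendsto (fun n : ℕ => (2*(n:ℝ)+1)^d) atTop atTop := by
      apply (tendsto_pow_atTop (by omega : d ≠ 0)).comp
      apply tendsto_atTop_add_const_right
      exact tendsto_natCast_atTop_atTop.const_mul_atTop two_pos
    have h2 : Tendsto (fun n : ℕ => ((2*(n:ℝ)+1)^d)⁻¹) atTop (nhds 0) :=
      tendsto_inv_atTop_zero.comp h1
    have h3 : Tendsto (fun n : ℕ => (1 - ((2*(n:ℝ)+1)^d)⁻¹) / 2 * Real.log 2) atTop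
        (nhds ((1 - 0)/2 * Real.log 2)) :=
      ((tendsto_const_nhds.sub h2).div_const 2).mul_const _
    have heq : ∀ n : ℕ, g n = (1 - ((2*(n:ℝ)+1)^d)⁻¹) / 2 * Real.log 2 := by
      intro n
      rw [hg]
      have hX : (2*(n:ℝ)+1)^d ≠ 0 := ne_of_gt (hNpos n)
      field_simp
    rw [show Real.log 2 / 2 = (1 - 0)/2 * Real.log 2 by ring]
    exact h3.congr (fun n => (heq n).symm)
  exact le_of_tendsto_of_tendsto' hgt htend hgle
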